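/- For every ℓ ≥ 1 and ω ≥ 2, E(ℓ,ω) ≤ 1 + log_2(ωℓ)/log_2(ω/(ω−1)) + ω. -/

import Mathlib

open Finset

/-- `γ_{ω,m} = (1/ω^m) ∑_{i=1}^{ω} C(ω,i) (-1)^{i+1} (ω-i)^m`. -/
noncomputable def gam (w m : ℕ) : ℝ :=
  (1 / (w : ℝ) ^ m) * ∑ i ∈ Icc 1 w, (w.choose i : ℝ) * (-1) ^ (i + 1) * ((w - i : ℕ) : ℝ) ^ m

namespace Stmt5Aux

/-- The set of non-surjective functions `Fin m → Fin w`, as union of "misses j" sets. -/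
def NS (w m : ℕ) : ℕ :=
  #((univ : Finset (Fin w)).biUnion fun j => Fintype.piFinset fun _ : Fin m => ({j}ᶜ : Finset (Fin w)))

lemma sum_eq_NS (w m : ℕ) :
    ∑ i ∈ Icc 1 w, (w.choose i : ℤ) * (-1) ^ (i + 1) * ((w - i : ℕ) : ℤ) ^ m = NS w m := by
  classical
  have h := Finset.inclusion_exclusion_card_biUnion (univ : Finset (Fin w))
    (fun j => Fintype.piFinset fun _ : Fin m => ({j}ᶜ : Finset (Fin w)))
  have hcard : ∀ (t : Finset (Fin w)) (ht : t.Nonempty),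
      #(t.inf' ht fun j => Fintype.piFinset fun _ : Fin m => ({j}ᶜ : Finset (Fin w)))
        = (w - #t) ^ m := by
    intro t ht
    have : (t.inf' ht fun j => Fintype.piFinset fun _ : Fin m => ({j}ᶜ : Finset (Fin w)))
        = Fintype.piFinset fun _ : Fin m => (tᶜ : Finset (Fin w)) := by
      ext f
      simp only [Finset.mem_inf', Fintype.mem_piFinset, Finset.mem_compl, Finset.mem_singleton]
      constructor
      · intro h x hx; exact h _ hx x rfl
      · intro h j hj x hfx; exact h x (hfx ▸ hj)
    rw [this, Fintype.card_piFinset]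
    simp [Finset.card_compl]
  rw [NS, h]
  have h2 : ∑ t : ((univ : Finset (Fin w)).powerset.filter (·.Nonempty)),
      ((-1:ℤ) ^ (#t.1 + 1) * #(t.1.inf' (mem_filter.1 t.2).2
        fun j => Fintype.piFinset fun _ : Fin m => ({j}ᶜ : Finset (Fin w))))
      = ∑ t ∈ (univ : Finset (Fin w)).powerset.filter (·.Nonempty),
        ((-1:ℤ) ^ (#t + 1) * ((w - #t) ^ m : ℕ)) := by
    rw [← Finset.sum_coe_sort ((univ : Finset (Fin w)).powerset.filter (·.Nonempty))
      (fun t => ((-1:ℤ) ^ (#t + 1) * ((w - #t) ^ m : ℕ)))]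
    exact Finset.sum_congr rfl fun t _ => by rw [hcard _ (mem_filter.1 t.2).2]
  rw [h2, Finset.sum_filter]
  set F : ℕ → ℤ := fun j => if j = 0 then 0 else (-1:ℤ)^(j+1) * ((w-j)^m : ℕ) with hF
  have h3 : ∀ t ∈ (univ : Finset (Fin w)).powerset,
      (if t.Nonempty then ((-1:ℤ) ^ (#t + 1) * ((w - #t) ^ m : ℕ)) else 0) = F #t := by
    intro t _
    by_cases ht : t.Nonempty
    · have h0 : #t ≠ 0 := by simpa [Finset.card_eq_zero, ← Finset.nonempty_iff_ne_empty] using ht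
      simp [hF, ht, h0]
    · have h0 : #t = 0 := by simpa [Finset.card_eq_zero, Finset.not_nonempty_iff_eq_empty] using ht
      simp [hF, ht, h0]
  rw [Finset.sum_congr rfl h3, Finset.sum_powerset, Finset.card_univ, Fintype.card_fin]
  have h4 : ∀ j ∈ Finset.range (w+1), ∑ t ∈ Finset.powersetCard j (univ : Finset (Fin w)), F #t
      = (w.choose j) • F j := by
    intro j _
    rw [Finset.sum_powersetCard, Finset.card_univ, Fintype.card_fin]
  rw [Finset.sum_congr rfl h4]
  have h5 : ∑ j ∈ Finset.range (w+1), w.choose j • F j = ∑ j ∈ Icc 1 w, w.choose j • F j :=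
    (Finset.sum_subset (by intro x hx; simp at hx ⊢; omega)
      (fun x hx hnx => by
        have : x = 0 := by simp at hx hnx; omega
        simp only [this, hF, if_pos rfl, smul_zero])).symm
  rw [h5]
  refine Finset.sum_congr rfl fun i hi => ?_
  have hi1 : i ≠ 0 := by simp at hi; omega
  simp only [hF, if_neg hi1, nsmul_eq_mul]
  push_cast
  ring

lemma NS_le_pow (w m : ℕ) : NS w m ≤ w ^ m := by
  calc NS w m ≤ #(univ : Finset (Fin m → Fin w)) := Finset.card_le_card (Finset.subset_univ _)
    _ = w ^ m := by simp [Finset.card_univ]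

lemma NS_le_mul (w m : ℕ) (hw : 1 ≤ w) : NS w m ≤ w * (w - 1) ^ m := by
  calc NS w m ≤ ∑ j : Fin w, #(Fintype.piFinset fun _ : Fin m => ({j}ᶜ : Finset (Fin w))) :=
        Finset.card_biUnion_le
    _ = w * (w - 1) ^ m := by
        simp [Fintype.card_piFinset, Finset.card_compl]

lemma gam_eq (w m : ℕ) : gam w m = (NS w m : ℝ) / (w : ℝ) ^ m := by
  rw [gam, one_div, inv_mul_eq_div]
  congr 1
  have := sum_eq_NS w m
  have : ((∑ i ∈ Icc 1 w, (w.choose i : ℤ) * (-1) ^ (i + 1) * ((w - i : ℕ) : ℤ) ^ m : ℤ) : ℝ)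
      = ((NS w m : ℤ) : ℝ) := congrArg (Int.cast : ℤ → ℝ) this
  push_cast at this
  rw [← this]

lemma gam_nonneg (w m : ℕ) : 0 ≤ gam w m := by
  rw [gam_eq]; positivity

lemma gam_le_one (w m : ℕ) (hw : 1 ≤ w) : gam w m ≤ 1 := by
  rw [gam_eq]
  have hwp : (0:ℝ) < (w:ℝ) ^ m := by positivity
  rw [div_le_one hwp]
  exact_mod_cast NS_le_pow w m

lemma gam_le_geom (w m : ℕ) (hw : 1 ≤ w) :
    gam w m ≤ (w : ℝ) * (((w : ℝ) - 1) / w) ^ m := by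
  rw [gam_eq]
  have hwp : (0:ℝ) < (w:ℝ) ^ m := by positivity
  rw [div_le_iff₀ hwp, div_pow, mul_assoc, div_mul_cancel₀]
  · calc (NS w m : ℝ) ≤ ((w * (w-1)^m : ℕ) : ℝ) := by exact_mod_cast NS_le_mul w m hw
      _ = (w:ℝ) * ((w:ℝ) - 1) ^ m := by
        push_cast [Nat.cast_sub hw]; ring
  · positivity

end Stmt5Aux

/-- `E(ℓ,ω) = ∑_{m=0}^∞ (1 - (1 - γ_{ω,m})^ℓ)` satisfies
`E(ℓ,ω) ≤ 1 + log₂(ωℓ)/log₂(ω/(ω-1)) + ω`. -/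
theorem stmt_5 (ℓ w : ℕ) (hℓ : 1 ≤ ℓ) (hw : 2 ≤ w) :
    ∑' m : ℕ, (1 - (1 - gam w m) ^ ℓ)
      ≤ 1 + Real.logb 2 ((w : ℝ) * ℓ) / Real.logb 2 ((w : ℝ) / ((w : ℝ) - 1)) + w := by
  have hw1 : 1 ≤ w := le_trans one_le_two hw
  have hwR : (2:ℝ) ≤ (w:ℝ) := by exact_mod_cast hw
  have hℓR : (1:ℝ) ≤ (ℓ:ℝ) := by exact_mod_cast hℓ
  have hw0 : (0:ℝ) < w := by linarith
  set r : ℝ := ((w:ℝ) - 1) / w with hr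
  have hr0 : 0 < r := div_pos (by linarith) hw0
  have hr1 : r < 1 := by rw [hr, div_lt_one hw0]; linarith
  set E : ℕ → ℝ := fun m => 1 - (1 - gam w m) ^ ℓ with hE
  have hE1 : ∀ m, E m ≤ 1 := by
    intro m
    have : (0:ℝ) ≤ (1 - gam w m) ^ ℓ := pow_nonneg (by linarith [Stmt5Aux.gam_le_one w m hw1]) ℓ
    simp only [hE]; linarith
  have hE0 : ∀ m, 0 ≤ E m := by
    intro m
    have : (1 - gam w m) ^ ℓ ≤ 1 :=
      pow_le_one₀ (by linarith [Stmt5Aux.gam_le_one w m hw1]) (by linarith [Stmt5Aux.gam_nonneg w m])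
    simp only [hE]; linarith
  have hEle : ∀ m, E m ≤ (ℓ:ℝ) * gam w m := by
    intro m
    have h := one_add_mul_le_pow (a := -(gam w m)) (by linarith [Stmt5Aux.gam_le_one w m hw1]) ℓ
    have h2 : (1 + -(gam w m)) ^ ℓ = (1 - gam w m) ^ ℓ := by rw [← sub_eq_add_neg]
    rw [h2] at h
    simp only [hE]; nlinarith
  have hgeom : ∀ m, E m ≤ ((ℓ:ℝ) * w) * r ^ m := by
    intro m
    calc E m ≤ (ℓ:ℝ) * gam w m := hEle m
      _ ≤ (ℓ:ℝ) * ((w:ℝ) * r ^ m) :=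
          mul_le_mul_of_nonneg_left (Stmt5Aux.gam_le_geom w m hw1) (by linarith)
      _ = ((ℓ:ℝ) * w) * r ^ m := by ring
  have hsumg : Summable fun m : ℕ => ((ℓ:ℝ) * w) * r ^ m :=
    (summable_geometric_of_lt_one hr0.le hr1).mul_left _
  have hsum : Summable E := Summable.of_nonneg_of_le hE0 hgeom hsumg
  set L : ℝ := Real.logb 2 ((w : ℝ) * ℓ) / Real.logb 2 ((w : ℝ) / ((w : ℝ) - 1)) with hL
  set M : ℕ := ⌈L⌉₊ + 1 with hM
  have hB : (1:ℝ) < (w:ℝ) / ((w:ℝ) - 1) := by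
    rw [lt_div_iff₀ (by linarith)]; linarith
  have hlogB : 0 < Real.log ((w:ℝ) / ((w:ℝ) - 1)) := Real.log_pos hB
  have hA1 : (1:ℝ) ≤ (w:ℝ) * ℓ := by nlinarith
  have hkey : L = Real.log ((w:ℝ) * ℓ) / Real.log ((w:ℝ) / ((w:ℝ) - 1)) := by
    rw [hL, Real.logb, Real.logb]
    rw [div_div_div_cancel_right₀]
    exact (Real.log_pos one_lt_two).ne'
  have hL0 : 0 ≤ L := by
    rw [hkey]
    exact div_nonneg (Real.log_nonneg hA1) hlogB.le
  have hlogr : Real.log r = - Real.log ((w:ℝ) / ((w:ℝ) - 1)) := by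
    rw [hr, ← Real.log_inv, inv_div]
  have hrL : r ^ L = 1 / ((w:ℝ) * ℓ) := by
    rw [Real.rpow_def_of_pos hr0, hkey, hlogr]
    have : -Real.log ((w:ℝ) / ((w:ℝ) - 1))
        * (Real.log ((w:ℝ) * ℓ) / Real.log ((w:ℝ) / ((w:ℝ) - 1))) = - Real.log ((w:ℝ) * ℓ) := by
      field_simp
    rw [this, Real.exp_neg, Real.exp_log (by linarith), one_div]
  have hrM : r ^ (M:ℕ) ≤ r * (1 / ((w:ℝ) * ℓ)) := by
    rw [← Real.rpow_natCast r M]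
    have h2 : r ^ ((M:ℕ):ℝ) ≤ r ^ (L + 1) := by
      apply Real.rpow_le_rpow_of_exponent_ge hr0 hr1.le
      push_cast [hM]
      linarith [Nat.le_ceil L]
    calc r ^ ((M:ℕ):ℝ) ≤ r ^ (L + 1) := h2
      _ = r ^ L * r := by rw [Real.rpow_add hr0, Real.rpow_one]
      _ = r * (1 / ((w:ℝ) * ℓ)) := by rw [hrL]; ring
  have hsplit := Summable.sum_add_tsum_nat_add (f := E) M hsum
  have hhead : ∑ m ∈ Finset.range M, E m ≤ (M:ℝ) := by
    calc ∑ m ∈ Finset.range M, E m ≤ ∑ _m ∈ Finset.range M, (1:ℝ) :=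
          Finset.sum_le_sum fun m _ => hE1 m
      _ = M := by simp
  have htail : ∑' m : ℕ, E (m + M) ≤ (w:ℝ) - 1 := by
    have hs1 : Summable fun m => E (m + M) := (summable_nat_add_iff M).2 hsum
    have hs2 : Summable fun m : ℕ => ((ℓ:ℝ) * w) * r ^ (m + M) := by
      have := (summable_geometric_of_lt_one hr0.le hr1).mul_left (((ℓ:ℝ) * w) * r ^ M)
      refine this.congr fun m => ?_
      rw [pow_add]; ring
    calc ∑' m : ℕ, E (m + M) ≤ ∑' m : ℕ, ((ℓ:ℝ) * w) * r ^ (m + M) :=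
          Summable.tsum_le_tsum (fun m => hgeom (m + M)) hs1 hs2
      _ = (((ℓ:ℝ) * w) * r ^ M) * ∑' m : ℕ, r ^ m := by
          rw [← tsum_mul_left]
          exact tsum_congr fun m => by rw [pow_add]; ring
      _ = (((ℓ:ℝ) * w) * r ^ M) * (1 - r)⁻¹ := by
          rw [tsum_geometric_of_lt_one hr0.le hr1]
      _ = (((ℓ:ℝ) * w) * r ^ M) * w := by
          congr 1
          rw [hr]
          rw [inv_eq_iff_eq_inv]
          field_simp
          ring
      _ ≤ (((ℓ:ℝ) * w) * (r * (1 / ((w:ℝ) * ℓ)))) * w := by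
          have hc : (0:ℝ) ≤ (ℓ:ℝ) * w := by positivity
          have := mul_le_mul_of_nonneg_left hrM hc
          nlinarith
      _ = (w:ℝ) * r := by field_simp
      _ = (w:ℝ) - 1 := by rw [hr]; field_simp
  have hMle : (M:ℝ) ≤ L + 2 := by
    have := Nat.ceil_lt_add_one hL0
    push_cast [hM]
    linarith
  calc ∑' m : ℕ, E m = ∑ m ∈ Finset.range M, E m + ∑' m : ℕ, E (m + M) := hsplit.symm
    _ ≤ (M:ℝ) + ((w:ℝ) - 1) := add_le_add hhead htail
    _ ≤ (L + 2) + ((w:ℝ) - 1) := by linarith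
    _ = 1 + L + w := by ring
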